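/- For every integer n ≥ 7 there exists a connected finite simple graph of order n and size exactly ⌊3n/2⌋ + 1 that has no independent minimum vertex cut; hence the size bound ⌊3n/2⌋ in the preceding result is best possible. -/

import Mathlib

open SimpleGraph

/-- `S` is a vertex cut of `G`: a proper subset of the vertex set whose removal
disconnects the graph. -/
def IsVertexCut {V : Type*} [Fintype V] (G : SimpleGraph V) (S : Finset V) : Prop :=
  (S : Set V) ≠ Set.univ ∧ ¬ (G.induce ((S : Set V)ᶜ)).Connected

/-- The connectivity `κ(G)`: the minimum cardinality of a vertex cut of `G`. -/
noncomputable def graphConnectivity {V : Type*} [Fintype V] (G : SimpleGraph V) : ℕ :=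
  sInf {k | ∃ S : Finset V, IsVertexCut G S ∧ S.card = k}

def Erel (n a b : ℕ) : Prop :=
  (a = 0 ∧ (b = 1 ∨ b = 2)) ∨
  (1 ≤ a ∧ b = a + 1 ∧ b ≤ n - 1) ∨
  (a = 1 ∧ b = n - 1) ∨
  (1 ≤ a ∧ b = a + (n - 1) / 2 ∧ b ≤ n - 1)

lemma Erel_lt {n a b : ℕ} (h7 : 7 ≤ n) (h : Erel n a b) : a < b := by
  unfold Erel at h; omega

def myG (n : ℕ) : SimpleGraph (Fin n) where
  Adj u v := u ≠ v ∧ (Erel n u.val v.val ∨ Erel n v.val u.val)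
  symm := ⟨fun u v h => ⟨Ne.symm h.1, Or.symm h.2⟩⟩
  loopless := ⟨fun v h => h.1 rfl⟩

def sset (n x y : ℕ) : Set (Fin n) := {v | v.val ≠ x ∧ v.val ≠ y}

abbrev IG (n x y : ℕ) : SimpleGraph ↥(sset n x y) := (myG n).induce (sset n x y)

def vert (n x y : ℕ) (a : ℕ) (h : a < n ∧ a ≠ x ∧ a ≠ y) : ↥(sset n x y) :=
  ⟨⟨a, h.1⟩, h.2.1, h.2.2⟩

@[simp] lemma vert_val (n x y a : ℕ) (h) : ((vert n x y a h : ↥(sset n x y)) : Fin n).val = a := rfl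

lemma adj_step {n x y : ℕ} (h7 : 7 ≤ n) (u v : ↥(sset n x y))
    (h : Erel n (u : Fin n).val (v : Fin n).val) : (IG n x y).Adj u v := by
  have hlt := Erel_lt h7 h
  refine ⟨fun e => ?_, Or.inl h⟩
  simp only [Function.Embedding.coe_subtype] at e
  have : (u : Fin n).val = (v : Fin n).val := congrArg Fin.val e
  omega

lemma rstep {n x y : ℕ} (h7 : 7 ≤ n) (u v : ↥(sset n x y))
    (h : Erel n (u : Fin n).val (v : Fin n).val ∨ Erel n (v : Fin n).val (u : Fin n).val) :
    (IG n x y).Reachable u v := by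
  rcases h with h | h
  · exact (adj_step h7 u v h).reachable
  · exact ((adj_step h7 v u h).reachable).symm

lemma chainIJ {n x y : ℕ} (h7 : 7 ≤ n) (i j : ℕ) (hij : i ≤ j) (h1 : 1 ≤ i) (hj : j ≤ n - 1)
    (hmem : ∀ k, i ≤ k → k ≤ j → k ≠ x ∧ k ≠ y) :
    ∀ u v : ↥(sset n x y), (u : Fin n).val = i → (v : Fin n).val = j →
      (IG n x y).Reachable u v := by
  induction j, hij using Nat.le_induction with
  | base =>
    intro u v hu hv
    have : u = v := Subtype.ext (Fin.ext (by omega))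
    rw [this]
  | succ j hij ih =>
    intro u v hu hv
    have hw : j < n ∧ j ≠ x ∧ j ≠ y := by
      refine ⟨by omega, (hmem j (by omega) (by omega)).1, (hmem j (by omega) (by omega)).2⟩
    refine (ih (by omega) (fun k hk1 hk2 => hmem k hk1 (by omega)) u (vert n x y j hw) hu rfl).trans ?_
    refine rstep h7 _ v (Or.inl ?_)
    show Erel n j (v : Fin n).val
    unfold Erel; omega

/-- chain between arbitrary endpoints of an interval all inside `sset`. -/
lemma chain' {n x y : ℕ} (h7 : 7 ≤ n) (a b : ℕ) (h1 : 1 ≤ a) (h2 : 1 ≤ b)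
    (ha : a ≤ n - 1) (hb : b ≤ n - 1)
    (hmem : ∀ k, min a b ≤ k → k ≤ max a b → k ≠ x ∧ k ≠ y) :
    ∀ u v : ↥(sset n x y), (u : Fin n).val = a → (v : Fin n).val = b →
      (IG n x y).Reachable u v := by
  intro u v hu hv
  rcases le_total a b with hab | hab
  · exact chainIJ h7 a b hab h1 hb (fun k hk1 hk2 => hmem k (by omega) (by omega)) u v hu hv
  · exact (chainIJ h7 b a hab h2 ha (fun k hk1 hk2 => hmem k (by omega) (by omega)) v u hv hu).symm

lemma connected_of_anchor {n x y : ℕ} (A : ↥(sset n x y))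
    (key : ∀ u, (IG n x y).Reachable u A) : (IG n x y).Connected := by
  rw [connected_iff]
  exact ⟨fun u v => (key u).trans (key v).symm, ⟨A⟩⟩

lemma conn_single {n x y : ℕ} (h7 : 7 ≤ n) (hy : y = n) : (IG n x y).Connected := by
  by_cases hx0 : x = 0
  · refine connected_of_anchor (vert n x y 1 ⟨by omega, by omega, by omega⟩) ?_
    rintro ⟨⟨a, han⟩, hax, hay⟩
    replace hax : a ≠ x := hax
    replace hay : a ≠ y := hay
    exact chain' h7 a 1 (by omega) (by omega) (by omega) (by omega)
      (fun k hk1 hk2 => by omega) _ _ rfl rfl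
  by_cases hx1 : x = 1
  · refine connected_of_anchor (vert n x y 2 ⟨by omega, by omega, by omega⟩) ?_
    rintro ⟨⟨a, han⟩, hax, hay⟩
    replace hax : a ≠ x := hax
    replace hay : a ≠ y := hay
    rcases (by omega : a = 0 ∨ (2 ≤ a ∧ a ≤ n - 1)) with h | h
    · exact rstep h7 _ _ (Or.inl (by show Erel n a 2; unfold Erel; omega))
    · exact chain' h7 a 2 (by omega) (by omega) (by omega) (by omega)
        (fun k hk1 hk2 => by omega) _ _ rfl rfl
  by_cases hx2 : x = 2
  · refine connected_of_anchor (vert n x y 1 ⟨by omega, by omega, by omega⟩) ?_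
    rintro ⟨⟨a, han⟩, hax, hay⟩
    replace hax : a ≠ x := hax
    replace hay : a ≠ y := hay
    rcases (by omega : a = 0 ∨ a = 1 ∨ (3 ≤ a ∧ a ≤ n - 1)) with h | h | h
    · exact rstep h7 _ _ (Or.inl (by show Erel n a 1; unfold Erel; omega))
    · exact chain' h7 a 1 (by omega) (by omega) (by omega) (by omega)
        (fun k hk1 hk2 => by omega) _ _ rfl rfl
    · refine (chain' h7 a (n-1) (by omega) (by omega) (by omega) (by omega)
        (fun k hk1 hk2 => by omega) _ (vert n x y (n-1) ⟨by omega, by omega, by omega⟩) rfl rfl).trans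
        (rstep h7 _ _ (Or.inr (by show Erel n 1 (n-1); unfold Erel; omega)))
  · -- x ≥ 3 (or x ≥ n)
    refine connected_of_anchor (vert n x y 1 ⟨by omega, by omega, by omega⟩) ?_
    rintro ⟨⟨a, han⟩, hax, hay⟩
    replace hax : a ≠ x := hax
    replace hay : a ≠ y := hay
    rcases (by omega : a = 0 ∨ (1 ≤ a ∧ a < x) ∨ (x < a ∧ a ≤ n - 1)) with h | h | h
    · exact rstep h7 _ _ (Or.inl (by show Erel n a 1; unfold Erel; omega))
    · exact chain' h7 a 1 (by omega) (by omega) (by omega) (by omega)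
        (fun k hk1 hk2 => by omega) _ _ rfl rfl
    · refine (chain' h7 a (n-1) (by omega) (by omega) (by omega) (by omega)
        (fun k hk1 hk2 => by omega) _ (vert n x y (n-1) ⟨by omega, by omega, by omega⟩) rfl rfl).trans
        (rstep h7 _ _ (Or.inr (by show Erel n 1 (n-1); unfold Erel; omega)))

lemma conn_zero_pair {n x y : ℕ} (h7 : 7 ≤ n) (hx : x = 0) (hy3 : 3 ≤ y) (hym : y ≤ n - 1) :
    (IG n x y).Connected := by
  refine connected_of_anchor (vert n x y 1 ⟨by omega, by omega, by omega⟩) ?_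
  rintro ⟨⟨a, han⟩, hax, hay⟩
  replace hax : a ≠ x := hax
  replace hay : a ≠ y := hay
  rcases (by omega : (1 ≤ a ∧ a < y) ∨ (y < a ∧ a ≤ n - 1)) with h | h
  · exact chain' h7 a 1 (by omega) (by omega) (by omega) (by omega)
      (fun k hk1 hk2 => by omega) _ _ rfl rfl
  · refine (chain' h7 a (n-1) (by omega) (by omega) (by omega) (by omega)
      (fun k hk1 hk2 => by omega) _ (vert n x y (n-1) ⟨by omega, by omega, by omega⟩) rfl rfl).trans
      (rstep h7 _ _ (Or.inr (by show Erel n 1 (n-1); unfold Erel; omega)))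

lemma conn_pair {n x y : ℕ} (h7 : 7 ≤ n) (hx : 1 ≤ x) (hxy : x + 2 ≤ y) (hym : y ≤ n - 1)
    (hwrap : ¬(x = 1 ∧ y = n - 1)) (hchord : y ≠ x + (n - 1) / 2) :
    (IG n x y).Connected := by
  -- a connecting chord
  obtain ⟨c, hc1, hc2, hcase⟩ : ∃ c, 1 ≤ c ∧ c + (n-1)/2 ≤ n-1 ∧
      ((x < c ∧ c < y ∧ y < c + (n-1)/2) ∨ (c < x ∧ x < c + (n-1)/2 ∧ c + (n-1)/2 < y)) := by
    by_cases h1 : y + (n-1)/2 ≤ n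
    · exact ⟨y - 1, by omega, by omega, Or.inl (by omega)⟩
    by_cases h2 : y = n - 1
    · by_cases h3 : x + (n-1)/2 ≤ n - 1
      · exact ⟨x - 1, by omega, by omega, Or.inr (by omega)⟩
      · exact ⟨n - 2 - (n-1)/2, by omega, by omega, Or.inr (by omega)⟩
    by_cases h4 : x + (n-1)/2 < y
    · exact ⟨y + 1 - (n-1)/2, by omega, by omega, Or.inl (by omega)⟩
    by_cases h5 : x + (n-1)/2 + 1 ≤ n - 1
    · exact ⟨x + 1, by omega, by omega, Or.inl (by omega)⟩
    · exact ⟨x + 1 - (n-1)/2, by omega, by omega, Or.inr (by omega)⟩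
  by_cases hx1 : 2 ≤ x
  · -- anchor 1
    let v1 : ↥(sset n x y) := vert n x y 1 ⟨by omega, by omega, by omega⟩
    have hv1 : (v1 : Fin n).val = 1 := rfl
    have low1 : ∀ u : ↥(sset n x y), 1 ≤ (u : Fin n).val → (u : Fin n).val ≤ x - 1 →
        (IG n x y).Reachable u v1 := fun u h1 h2 =>
      chain' h7 (u : Fin n).val 1 (by omega) (by omega) (by omega) (by omega)
        (fun k hk1 hk2 => by omega) u v1 rfl hv1
    have high1 : ∀ u : ↥(sset n x y), y + 1 ≤ (u : Fin n).val → (u : Fin n).val ≤ n - 1 →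
        (IG n x y).Reachable u v1 := by
      intro u h1 h2
      refine (chain' h7 (u : Fin n).val (n-1) (by omega) (by omega) (by omega) (by omega)
        (fun k hk1 hk2 => by omega) u (vert n x y (n-1) ⟨by omega, by omega, by omega⟩)
        rfl rfl).trans (rstep h7 _ _ (Or.inr (by show Erel n 1 (n-1); unfold Erel; omega)))
    have mid1 : ∀ u : ↥(sset n x y), x + 1 ≤ (u : Fin n).val → (u : Fin n).val ≤ y - 1 →
        (IG n x y).Reachable u v1 := by
      intro u h1 h2
      rcases hcase with ⟨hc3, hc4, hc5⟩ | ⟨hc3, hc4, hc5⟩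
      · -- chord from mid to high
        let vc : ↥(sset n x y) := vert n x y c ⟨by omega, by omega, by omega⟩
        let vch : ↥(sset n x y) := vert n x y (c + (n-1)/2) ⟨by omega, by omega, by omega⟩
        refine ((chain' h7 (u : Fin n).val c (by omega) (by omega) (by omega) (by omega)
          (fun k hk1 hk2 => by omega) u vc rfl rfl).trans
          (rstep h7 vc vch (Or.inl (by show Erel n c (c + (n-1)/2); unfold Erel; omega)))).trans
          (high1 vch (by show y + 1 ≤ c + (n-1)/2; omega) (by show c + (n-1)/2 ≤ n - 1; omega))
      · -- chord from low to mid
        let vc : ↥(sset n x y) := vert n x y c ⟨by omega, by omega, by omega⟩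
        let vch : ↥(sset n x y) := vert n x y (c + (n-1)/2) ⟨by omega, by omega, by omega⟩
        refine ((chain' h7 (u : Fin n).val (c + (n-1)/2) (by omega) (by omega) (by omega) (by omega)
          (fun k hk1 hk2 => by omega) u vch rfl rfl).trans
          (rstep h7 vch vc (Or.inr (by show Erel n c (c + (n-1)/2); unfold Erel; omega)))).trans
          (low1 vc (by show 1 ≤ c; omega) (by show c ≤ x - 1; omega))
    refine connected_of_anchor v1 ?_
    intro u
    obtain ⟨⟨a, han⟩, hax, hay⟩ := u
    replace hax : a ≠ x := hax
    replace hay : a ≠ y := hay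
    rcases (by omega : a = 0 ∨ (1 ≤ a ∧ a ≤ x - 1) ∨ (x + 1 ≤ a ∧ a ≤ y - 1) ∨
        (y + 1 ≤ a ∧ a ≤ n - 1)) with h | h | h | h
    · exact rstep h7 _ _ (Or.inl (by show Erel n a 1; unfold Erel; omega))
    · exact low1 _ h.1 h.2
    · exact mid1 _ h.1 h.2
    · exact high1 _ h.1 h.2
  · -- x = 1, anchor 2
    have hx1' : x = 1 := by omega
    let v2 : ↥(sset n x y) := vert n x y 2 ⟨by omega, by omega, by omega⟩
    have mid2 : ∀ u : ↥(sset n x y), 2 ≤ (u : Fin n).val → (u : Fin n).val ≤ y - 1 →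
        (IG n x y).Reachable u v2 := fun u h1 h2 =>
      chain' h7 (u : Fin n).val 2 (by omega) (by omega) (by omega) (by omega)
        (fun k hk1 hk2 => by omega) u v2 rfl rfl
    have high2 : ∀ u : ↥(sset n x y), y + 1 ≤ (u : Fin n).val → (u : Fin n).val ≤ n - 1 →
        (IG n x y).Reachable u v2 := by
      intro u h1 h2
      rcases hcase with ⟨hc3, hc4, hc5⟩ | ⟨hc3, hc4, hc5⟩
      · let vc : ↥(sset n x y) := vert n x y c ⟨by omega, by omega, by omega⟩
        let vch : ↥(sset n x y) := vert n x y (c + (n-1)/2) ⟨by omega, by omega, by omega⟩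
        refine ((chain' h7 (u : Fin n).val (c + (n-1)/2) (by omega) (by omega) (by omega) (by omega)
          (fun k hk1 hk2 => by omega) u vch rfl rfl).trans
          (rstep h7 vch vc (Or.inr (by show Erel n c (c + (n-1)/2); unfold Erel; omega)))).trans
          (mid2 vc (by show 2 ≤ c; omega) (by show c ≤ y - 1; omega))
      · omega
    refine connected_of_anchor v2 ?_
    intro u
    obtain ⟨⟨a, han⟩, hax, hay⟩ := u
    replace hax : a ≠ x := hax
    replace hay : a ≠ y := hay
    rcases (by omega : a = 0 ∨ (2 ≤ a ∧ a ≤ y - 1) ∨ (y + 1 ≤ a ∧ a ≤ n - 1)) with h | h | h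
    · exact rstep h7 _ _ (Or.inl (by show Erel n a 2; unfold Erel; omega))
    · exact mid2 _ h.1 h.2
    · exact high2 _ h.1 h.2

def pedge (n i : ℕ) : ℕ × ℕ :=
  if i = 0 then (0, 1) else if i = 1 then (0, 2)
  else if i ≤ n - 1 then (i - 1, i)
  else if i = n then (1, n - 1)
  else (i - n, i - n + (n - 1) / 2)

def eN (n : ℕ) : ℕ := n + 1 + (n - 1 - (n - 1) / 2)

lemma pedge_spec {n : ℕ} (h7 : 7 ≤ n) (i : ℕ) (hi : i < eN n) :
    (pedge n i).1 < (pedge n i).2 ∧ (pedge n i).2 ≤ n - 1 ∧ Erel n (pedge n i).1 (pedge n i).2 := by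
  unfold eN at hi
  unfold pedge Erel
  split_ifs <;> dsimp only <;> omega

lemma pedge_inj {n : ℕ} (h7 : 7 ≤ n) {i j : ℕ} (hi : i < eN n) (hj : j < eN n)
    (h1 : (pedge n i).1 = (pedge n j).1) (h2 : (pedge n i).2 = (pedge n j).2) : i = j := by
  unfold eN at hi hj
  unfold pedge at h1 h2
  split_ifs at h1 h2 <;> dsimp only at h1 h2 <;> omega

lemma erel_index {n : ℕ} (h7 : 7 ≤ n) {a b : ℕ} (hE : Erel n a b) :
    ∃ i < eN n, pedge n i = (a, b) := by
  unfold Erel at hE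
  rcases hE with ⟨ha, hb | hb⟩ | ⟨ha, hb, hb2⟩ | ⟨ha, hb⟩ | ⟨ha, hb, hb2⟩
  · exact ⟨0, by unfold eN; omega, by subst ha hb; rfl⟩
  · exact ⟨1, by unfold eN; omega, by subst ha hb; rfl⟩
  · refine ⟨a + 1, by unfold eN; omega, ?_⟩
    unfold pedge
    rw [if_neg (by omega), if_neg (by omega), if_pos (by omega)]
    simp only [Prod.mk.injEq]
    omega
  · refine ⟨n, by unfold eN; omega, ?_⟩
    unfold pedge
    rw [if_neg (by omega), if_neg (by omega), if_neg (by omega), if_pos rfl]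
    simp only [Prod.mk.injEq]
    omega
  · refine ⟨n + a, by unfold eN; omega, ?_⟩
    unfold pedge
    rw [if_neg (by omega), if_neg (by omega), if_neg (by omega), if_neg (by omega)]
    simp only [Prod.mk.injEq]
    omega

def fedge (n : ℕ) (hn : 0 < n) (i : ℕ) : Sym2 (Fin n) :=
  s(⟨(pedge n i).1 % n, Nat.mod_lt _ hn⟩, ⟨(pedge n i).2 % n, Nat.mod_lt _ hn⟩)

lemma edge_count {n : ℕ} (h7 : 7 ≤ n) : (myG n).edgeSet.ncard = 3 * n / 2 + 1 := by
  classical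
  have hn : 0 < n := by omega
  have hset : (myG n).edgeSet = ↑((Finset.range (eN n)).image (fedge n hn)) := by
    ext e
    refine Sym2.ind (fun u v => ?_) e
    simp only [mem_edgeSet, Finset.coe_image, Finset.coe_range, Set.mem_image, Set.mem_Iio]
    constructor
    · rintro ⟨hne, hE | hE⟩
      · obtain ⟨i, hi, hp⟩ := erel_index h7 hE
        refine ⟨i, hi, ?_⟩
        have hp1 : (pedge n i).1 = u.val := by rw [hp]
        have hp2 : (pedge n i).2 = v.val := by rw [hp]
        have h1 : (⟨(pedge n i).1 % n, Nat.mod_lt _ hn⟩ : Fin n) = u :=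
          Fin.ext (show (pedge n i).1 % n = u.val by rw [hp1]; exact Nat.mod_eq_of_lt u.isLt)
        have h2 : (⟨(pedge n i).2 % n, Nat.mod_lt _ hn⟩ : Fin n) = v :=
          Fin.ext (show (pedge n i).2 % n = v.val by rw [hp2]; exact Nat.mod_eq_of_lt v.isLt)
        unfold fedge
        rw [h1, h2]
      · obtain ⟨i, hi, hp⟩ := erel_index h7 hE
        refine ⟨i, hi, ?_⟩
        have hp1 : (pedge n i).1 = v.val := by rw [hp]
        have hp2 : (pedge n i).2 = u.val := by rw [hp]
        have h1 : (⟨(pedge n i).1 % n, Nat.mod_lt _ hn⟩ : Fin n) = v :=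
          Fin.ext (show (pedge n i).1 % n = v.val by rw [hp1]; exact Nat.mod_eq_of_lt v.isLt)
        have h2 : (⟨(pedge n i).2 % n, Nat.mod_lt _ hn⟩ : Fin n) = u :=
          Fin.ext (show (pedge n i).2 % n = u.val by rw [hp2]; exact Nat.mod_eq_of_lt u.isLt)
        unfold fedge
        rw [h1, h2]
        exact Sym2.eq_swap
    · rintro ⟨i, hi, hFi⟩
      obtain ⟨hlt, hle, hE⟩ := pedge_spec h7 i hi
      unfold fedge at hFi
      rw [Sym2.eq_iff] at hFi
      have m1 : (pedge n i).1 % n = (pedge n i).1 := Nat.mod_eq_of_lt (by omega)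
      have m2 : (pedge n i).2 % n = (pedge n i).2 := Nat.mod_eq_of_lt (by omega)
      rcases hFi with ⟨e1, e2⟩ | ⟨e1, e2⟩
      · have hu : (pedge n i).1 % n = u.val := congrArg Fin.val e1
        have hv : (pedge n i).2 % n = v.val := congrArg Fin.val e2
        rw [m1] at hu; rw [m2] at hv
        refine ⟨fun hh => ?_, Or.inl ?_⟩
        · have := congrArg Fin.val hh; omega
        · rw [← hu, ← hv]; exact hE
      · have hu : (pedge n i).2 % n = u.val := congrArg Fin.val e2
        have hv : (pedge n i).1 % n = v.val := congrArg Fin.val e1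
        rw [m2] at hu; rw [m1] at hv
        refine ⟨fun hh => ?_, Or.inr ?_⟩
        · have := congrArg Fin.val hh; omega
        · rw [← hu, ← hv]; exact hE
  rw [hset, Set.ncard_coe_finset, Finset.card_image_of_injOn, Finset.card_range]
  · unfold eN; omega
  · intro i hi j hj hFij
    simp only [Finset.coe_range, Set.mem_Iio] at hi hj
    obtain ⟨ilt, ile, -⟩ := pedge_spec h7 i hi
    obtain ⟨jlt, jle, -⟩ := pedge_spec h7 j hj
    unfold fedge at hFij
    rw [Sym2.eq_iff] at hFij
    have mi1 : (pedge n i).1 % n = (pedge n i).1 := Nat.mod_eq_of_lt (by omega)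
    have mi2 : (pedge n i).2 % n = (pedge n i).2 := Nat.mod_eq_of_lt (by omega)
    have mj1 : (pedge n j).1 % n = (pedge n j).1 := Nat.mod_eq_of_lt (by omega)
    have mj2 : (pedge n j).2 % n = (pedge n j).2 := Nat.mod_eq_of_lt (by omega)
    rcases hFij with ⟨e1, e2⟩ | ⟨e1, e2⟩
    · have q1 : (pedge n i).1 % n = (pedge n j).1 % n := congrArg Fin.val e1
      have q2 : (pedge n i).2 % n = (pedge n j).2 % n := congrArg Fin.val e2
      rw [mi1, mj1] at q1; rw [mi2, mj2] at q2
      exact pedge_inj h7 hi hj q1 q2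
    · have q1 : (pedge n i).1 % n = (pedge n j).2 % n := congrArg Fin.val e1
      have q2 : (pedge n i).2 % n = (pedge n j).1 % n := congrArg Fin.val e2
      rw [mi1, mj2] at q1; rw [mi2, mj1] at q2
      omega

lemma cut12 {n : ℕ} (h7 : 7 ≤ n) :
    IsVertexCut (myG n) {⟨1, by omega⟩, ⟨2, by omega⟩} := by
  constructor
  · intro h
    have h0 : (⟨0, by omega⟩ : Fin n) ∈
        (↑({⟨1, by omega⟩, ⟨2, by omega⟩} : Finset (Fin n)) : Set (Fin n)) := by
      rw [h]; trivial
    simp only [Finset.coe_insert, Finset.coe_singleton, Set.mem_insert_iff,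
      Set.mem_singleton_iff, Fin.mk.injEq] at h0
    omega
  · intro hc
    have m0 : (⟨0, by omega⟩ : Fin n) ∈
        (↑({⟨1, by omega⟩, ⟨2, by omega⟩} : Finset (Fin n)) : Set (Fin n))ᶜ := by
      simp only [Set.mem_compl_iff, Finset.coe_insert, Finset.coe_singleton,
        Set.mem_insert_iff, Set.mem_singleton_iff, Fin.mk.injEq]
      omega
    have m3 : (⟨3, by omega⟩ : Fin n) ∈
        (↑({⟨1, by omega⟩, ⟨2, by omega⟩} : Finset (Fin n)) : Set (Fin n))ᶜ := by
      simp only [Set.mem_compl_iff, Finset.coe_insert, Finset.coe_singleton,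
        Set.mem_insert_iff, Set.mem_singleton_iff, Fin.mk.injEq]
      omega
    obtain ⟨w⟩ := hc.preconnected ⟨_, m0⟩ ⟨_, m3⟩
    have hnil : ¬ w.Nil := SimpleGraph.Walk.not_nil_of_ne (by
      intro h
      have h' := congrArg Subtype.val h
      have h'' : (0 : ℕ) = (3 : ℕ) := congrArg Fin.val h'
      omega)
    have hadj := w.adj_snd hnil
    have hadj' : (myG n).Adj ⟨0, by omega⟩ ((w.getVert 1) : Fin n) := hadj
    obtain ⟨hne, hE | hE⟩ := hadj'
    · have hmem := (w.getVert 1).2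
      simp only [Set.mem_compl_iff, Finset.coe_insert, Finset.coe_singleton,
        Set.mem_insert_iff, Set.mem_singleton_iff] at hmem
      unfold Erel at hE
      simp only [Fin.val_mk] at hE
      rcases hE with ⟨-, hb | hb⟩ | ⟨ha, -⟩ | ⟨ha, -⟩ | ⟨ha, -⟩
      · exact hmem (Or.inl (Fin.ext (by simpa using hb)))
      · exact hmem (Or.inr (Fin.ext (by simpa using hb)))
      · omega
      · omega
      · omega
    · have := Erel_lt h7 hE
      simp at this

lemma conn_congr {n : ℕ} {s t : Set (Fin n)} (h : s = t)
    (hc : ((myG n).induce s).Connected) : ((myG n).induce t).Connected := by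
  subst h; exact hc

/-- For every `n ≥ 7` there is a connected graph of order `n` and size
`⌊3n/2⌋ + 1` with no independent minimum vertex cut. -/
theorem exists_graph_size_no_independent_minimum_vertex_cut
    (n : ℕ) (h7 : 7 ≤ n) :
    ∃ G : SimpleGraph (Fin n), G.Connected ∧ G.edgeSet.ncard = 3 * n / 2 + 1 ∧
      ¬ ∃ S : Finset (Fin n), IsVertexCut G S ∧ S.card = graphConnectivity G ∧
        ∀ a ∈ S, ∀ b ∈ S, ¬ G.Adj a b := by
  refine ⟨myG n, ?_, edge_count h7, ?_⟩
  · have hu : sset n n n = Set.univ := by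
      ext v
      simp only [sset, Set.mem_setOf_eq, Set.mem_univ, iff_true]
      have := v.isLt; omega
    have hconn0 := conn_single (n := n) (x := n) (y := n) h7 rfl
    exact (induceUnivIso (myG n)).connected_iff.mp (conn_congr hu hconn0)
  · rintro ⟨S, hScut, hScard, hSind⟩
    have hmem2 : (2 : ℕ) ∈ {k | ∃ T : Finset (Fin n), IsVertexCut (myG n) T ∧ T.card = k} := by
      refine ⟨{⟨1, by omega⟩, ⟨2, by omega⟩}, cut12 h7, ?_⟩
      rw [Finset.card_insert_of_notMem (by simp [Fin.mk.injEq]), Finset.card_singleton]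
    have hle : graphConnectivity (myG n) ≤ 2 := Nat.sInf_le hmem2
    have hcard2 : S.card ≤ 2 := by rw [hScard]; exact hle
    apply hScut.2
    rcases (by omega : S.card = 0 ∨ S.card = 1 ∨ S.card = 2) with h0 | h1 | h2
    · rw [Finset.card_eq_zero] at h0
      subst h0
      have hs : ((↑(∅ : Finset (Fin n)) : Set (Fin n)))ᶜ = sset n n n := by
        ext v
        simp only [Finset.coe_empty, Set.compl_empty, Set.mem_univ, sset, Set.mem_setOf_eq, true_iff]
        have := v.isLt; omega
      exact conn_congr hs.symm (conn_single h7 rfl)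
    · obtain ⟨a, rfl⟩ := Finset.card_eq_one.mp h1
      have hs : ((↑({a} : Finset (Fin n)) : Set (Fin n)))ᶜ = sset n a.val n := by
        ext v
        simp only [Finset.coe_singleton, Set.mem_compl_iff, Set.mem_singleton_iff, sset,
          Set.mem_setOf_eq, Fin.ext_iff]
        have := v.isLt; omega
      exact conn_congr hs.symm (conn_single h7 rfl)
    · obtain ⟨a, b, hab, rfl⟩ := Finset.card_eq_two.mp h2
      have hvne : a.val ≠ b.val := fun h => hab (Fin.ext h)
      have hnadj : ¬ (myG n).Adj a b :=
        hSind a (by simp) b (by simp)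
      have hE1 : ¬ Erel n a.val b.val := fun h => hnadj ⟨hab, Or.inl h⟩
      have hE2 : ¬ Erel n b.val a.val := fun h => hnadj ⟨hab, Or.inr h⟩
      unfold Erel at hE1 hE2
      have hlta := a.isLt
      have hltb := b.isLt
      have hs : ((↑({a, b} : Finset (Fin n)) : Set (Fin n)))ᶜ =
          sset n (min a.val b.val) (max a.val b.val) := by
        ext v
        simp only [Finset.coe_insert, Finset.coe_singleton, Set.mem_compl_iff,
          Set.mem_insert_iff, Set.mem_singleton_iff, sset, Set.mem_setOf_eq, Fin.ext_iff, not_or]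
        omega
      refine conn_congr hs.symm ?_
      by_cases hz : min a.val b.val = 0
      · exact conn_zero_pair h7 hz (by omega) (by omega)
      · exact conn_pair h7 (by omega) (by omega) (by omega) (by omega) (by omega)
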